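/- If x : ℝ → ℂⁿ solves ẋ(t) = f(t, x(t)) in the Carathéodory sense with f(·, x(·)) locally integrable, then for every k the phasor X_k(t) of x is absolutely continuous and satisfies Ẋ_k(t) = [F(f(·, x(·)))]_k(t) − jkω X_k(t) for almost every t. -/

import Mathlib

open MeasureTheory intervalIntegral

open Set

variable {E : Type*} [NormedAddCommGroup E] [NormedSpace ℂ E] [CompleteSpace E]

noncomputable def expc (c : ℂ) (τ : ℝ) : ℂ := Complex.exp (-(c * τ))

lemma expc_hasDerivAt (c : ℂ) (τ : ℝ) :
    HasDerivAt (expc c) (-c * expc c τ) τ := by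
  have h0 : HasDerivAt (fun τ : ℝ => (τ : ℂ)) 1 τ := by
    exact Complex.ofRealCLM.hasDerivAt (x := τ)
  have h1 : HasDerivAt (fun τ : ℝ => -(c * (τ : ℂ))) (-c) τ := by
    have h := (h0.const_mul c).neg; rw [mul_one] at h; exact h
  convert h1.cexp using 1
  · rfl
  · simp only [expc]; ring

lemma expc_continuous (c : ℂ) : Continuous (expc c) := by
  unfold expc; fun_prop

lemma expc_integral (c : ℂ) (s t : ℝ) :
    ∫ τ in s..t, (-c * expc c τ) = expc c t - expc c s :=
  integral_eq_sub_of_hasDerivAt (fun τ _ => expc_hasDerivAt c τ)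
    (((expc_continuous c).const_smul (-c)).intervalIntegrable s t)

lemma locInt_intervalIntegrable {F : ℝ → E} (hF : LocallyIntegrable F volume)
    (a b : ℝ) : IntervalIntegrable F volume a b :=
  intervalIntegrable_iff.mpr
    ((hF.integrableOn_isCompact isCompact_uIcc).mono_set uIoc_subset_uIcc)

lemma eF_intervalIntegrable (c : ℂ) {F : ℝ → E} (hF : LocallyIntegrable F volume)
    (a b : ℝ) : IntervalIntegrable (fun τ => expc c τ • F τ) volume a b := by
  refine intervalIntegrable_iff.mpr ?_
  refine IntegrableOn.mono_set ?_ uIoc_subset_uIcc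
  exact (hF.integrableOn_isCompact isCompact_uIcc).continuousOn_smul
    (expc_continuous c).continuousOn isCompact_uIcc

/-- Triangle Fubini / integration by parts step. -/
lemma fubini_step (c : ℂ) (F : ℝ → E) (hF : LocallyIntegrable F volume)
    (s t : ℝ) (hst : s ≤ t) :
    ∫ τ in s..t, (-c * expc c τ) • (∫ σ in s..τ, F σ)
      = ∫ σ in s..t, (expc c t - expc c σ) • F σ := by
  set μ := volume.restrict (Ioc s t) with hμ
  have hFI : IntegrableOn F (Ioc s t) volume :=
    (hF.integrableOn_isCompact isCompact_Icc).mono_set Ioc_subset_Icc_self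
  have heI : Integrable (fun τ => -c * expc c τ) μ := by
    refine Integrable.mono_measure ?_ (Measure.restrict_mono Ioc_subset_Icc_self le_rfl)
    exact ((expc_continuous c).const_smul (-c)).integrableOn_Icc
  set K : ℝ → ℝ → E := fun τ σ => if σ ≤ τ then (-c * expc c τ) • F σ else 0 with hK
  have hint : Integrable (Function.uncurry K) (μ.prod μ) := by
    have hG : Integrable (fun p : ℝ × ℝ => (-c * expc c p.1) • F p.2) (μ.prod μ) :=
      heI.smul_prod hFI
    have hS : MeasurableSet {p : ℝ × ℝ | p.2 ≤ p.1} :=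
      measurableSet_le measurable_snd measurable_fst
    have hrw : Function.uncurry K =
        {p : ℝ × ℝ | p.2 ≤ p.1}.indicator (fun p => (-c * expc c p.1) • F p.2) := by
      funext p
      simp [Function.uncurry, hK, Set.indicator_apply, Set.mem_setOf_eq]
    rw [hrw]
    exact hG.indicator hS
  have swap := integral_integral_swap hint
  have hL : ∫ τ, ∫ σ, K τ σ ∂μ ∂μ
      = ∫ τ in Ioc s t, (-c * expc c τ) • (∫ σ in s..τ, F σ) := by
    refine setIntegral_congr_fun measurableSet_Ioc (fun τ hτ => ?_)
    have h1 : ∫ σ, K τ σ ∂μ = ∫ σ in Ioc s t ∩ Iic τ, (-c * expc c τ) • F σ := by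
      rw [hμ, ← setIntegral_indicator measurableSet_Iic]
      refine setIntegral_congr_fun measurableSet_Ioc (fun σ _ => ?_)
      simp [hK, Set.indicator_apply]
    rw [h1]
    have h2 : Ioc s t ∩ Iic τ = Ioc s τ := by
      ext σ; constructor
      · rintro ⟨⟨h3, _⟩, h5⟩; exact ⟨h3, h5⟩
      · rintro ⟨h3, h4⟩; exact ⟨⟨h3, h4.trans hτ.2⟩, h4⟩
    rw [h2, MeasureTheory.integral_smul, intervalIntegral.integral_of_le hτ.1.le]
  have hR : ∫ σ, ∫ τ, K τ σ ∂μ ∂μ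
      = ∫ σ in Ioc s t, (expc c t - expc c σ) • F σ := by
    refine setIntegral_congr_fun measurableSet_Ioc (fun σ hσ => ?_)
    have h1 : ∫ τ, K τ σ ∂μ = ∫ τ in Ioc s t ∩ Ici σ, (-c * expc c τ) • F σ := by
      rw [hμ, ← setIntegral_indicator measurableSet_Ici]
      refine setIntegral_congr_fun measurableSet_Ioc (fun τ _ => ?_)
      simp [hK, Set.indicator_apply]
    rw [h1]
    have h2 : Ioc s t ∩ Ici σ = Icc σ t := by
      ext τ; constructor
      · rintro ⟨⟨_, h4⟩, h5⟩; exact ⟨h5, h4⟩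
      · rintro ⟨h3, h4⟩; exact ⟨⟨lt_of_lt_of_le hσ.1 h3, h4⟩, h3⟩
    rw [h2, _root_.integral_smul_const, integral_Icc_eq_integral_Ioc,
      ← intervalIntegral.integral_of_le hσ.2, expc_integral]
  rw [intervalIntegral.integral_of_le hst, intervalIntegral.integral_of_le hst, ← hL, ← hR]
  exact swap

/-- Key product-rule identity. -/
lemma key_identity (c : ℂ) (F x : ℝ → E) (hF : LocallyIntegrable F volume)
    (hxc : Continuous x)
    (hsol : ∀ s t : ℝ, x t - x s = ∫ τ in s..t, F τ)
    (s t : ℝ) (hst : s ≤ t) :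
    expc c t • x t - expc c s • x s
      = ∫ τ in s..t, (expc c τ • F τ - c • (expc c τ • x τ)) := by
  have hu : ∀ τ : ℝ, x τ = x s + ∫ σ in s..τ, F σ := by
    intro τ; rw [← hsol s τ]; abel
  have hu_cont : Continuous (fun τ => ∫ σ in s..τ, F σ) :=
    intervalIntegral.continuous_primitive (locInt_intervalIntegrable hF) s
  have hcongr : ∀ τ : ℝ,
      expc c τ • F τ - c • (expc c τ • x τ)
        = expc c τ • F τ + ((-c * expc c τ) • x s
            + (-c * expc c τ) • (∫ σ in s..τ, F σ)) := by
    intro τ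
    rw [hu τ]
    simp only [smul_smul, smul_add, neg_mul, neg_smul, sub_eq_add_neg]
    abel
  have hI1 := eF_intervalIntegrable c hF s t
  have hI2 : IntervalIntegrable (fun τ => (-c * expc c τ) • x s) volume s t :=
    (((expc_continuous c).const_smul (-c)).smul continuous_const).intervalIntegrable s t
  have hI3 : IntervalIntegrable (fun τ => (-c * expc c τ) • ∫ σ in s..τ, F σ) volume s t :=
    (((expc_continuous c).const_smul (-c)).smul hu_cont).intervalIntegrable s t
  have hI4 : IntervalIntegrable (fun σ => expc c t • F σ) volume s t :=
    (locInt_intervalIntegrable hF s t).smul (expc c t)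
  have h4 : (∫ σ in s..t, (expc c t - expc c σ) • F σ)
      = expc c t • (∫ σ in s..t, F σ) - ∫ σ in s..t, expc c σ • F σ := by
    have h5 : ∀ σ : ℝ, (expc c t - expc c σ) • F σ
        = expc c t • F σ - expc c σ • F σ := fun σ => sub_smul _ _ _
    rw [intervalIntegral.integral_congr (fun σ _ => h5 σ),
      intervalIntegral.integral_sub hI4 hI1, intervalIntegral.integral_smul]
  calc expc c t • x t - expc c s • x s
      = (∫ τ in s..t, expc c τ • F τ)
        + ((∫ τ in s..t, (-c * expc c τ) • x s)
            + ∫ τ in s..t, (-c * expc c τ) • ∫ σ in s..τ, F σ) := by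
        rw [intervalIntegral.integral_smul_const, expc_integral,
          fubini_step c F hF s t hst, h4, hu t]
        module
    _ = ∫ τ in s..t, (expc c τ • F τ - c • (expc c τ • x τ)) := by
        rw [← intervalIntegral.integral_add hI2 hI3,
          ← intervalIntegral.integral_add hI1 (hI2.add hI3)]
        exact (intervalIntegral.integral_congr (fun τ _ => (hcongr τ).symm))

/-- Sliding Fourier (phasor) coefficient of a vector-valued signal. -/
noncomputable def phasorV {n : ℕ} (T : ℝ) (x : ℝ → EuclideanSpace ℂ (Fin n)) (k : ℤ)
    (t : ℝ) : EuclideanSpace ℂ (Fin n) :=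
  (1 / (T : ℂ)) • ∫ τ in (t - T)..t,
    Complex.exp (-(Complex.I * (k : ℂ) * ((2 * Real.pi / T : ℝ) : ℂ) * (τ : ℂ))) • x τ

/-- if `x` solves `ẋ = f(t, x(t))` in the Carathéodory sense (absolutely
continuous, i.e. `x t − x s = ∫ₛᵗ f(τ, x(τ)) dτ`, with `f(·, x(·))` locally integrable),
then every phasor `X_k` is absolutely continuous and `Ẋ_k = [F(f(·,x(·)))]_k − jkω X_k`
almost everywhere. -/
theorem phasor_caratheodory {n : ℕ}
    (T : ℝ) (hT : 0 < T)
    (x : ℝ → EuclideanSpace ℂ (Fin n)) (f : ℝ → EuclideanSpace ℂ (Fin n) → EuclideanSpace ℂ (Fin n))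
    (hf : LocallyIntegrable (fun τ => f τ (x τ)) volume)
    (hsol : ∀ s t : ℝ, x t - x s = ∫ τ in s..t, f τ (x τ)) :
    ∀ k : ℤ,
      (∀ t₀ t₁ : ℝ,
        phasorV T x k t₁ - phasorV T x k t₀
          = ∫ τ in t₀..t₁,
              (phasorV T (fun s => f s (x s)) k τ
                - (Complex.I * (k : ℂ) * ((2 * Real.pi / T : ℝ) : ℂ)) • phasorV T x k τ)) ∧
      (∀ᵐ t : ℝ, HasDerivAt (phasorV T x k)
          (phasorV T (fun s => f s (x s)) k t
            - (Complex.I * (k : ℂ) * ((2 * Real.pi / T : ℝ) : ℂ)) • phasorV T x k t) t) := by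

  intro k
  set c : ℂ := Complex.I * (k : ℂ) * ((2 * Real.pi / T : ℝ) : ℂ) with hc
  set F : ℝ → EuclideanSpace ℂ (Fin n) := fun τ => f τ (x τ) with hFdef
  have hxc : Continuous x := by
    have hx0 : x = fun t => x 0 + ∫ τ in (0:ℝ)..t, F τ := by
      funext t; rw [← hsol 0 t]; abel
    rw [hx0]
    exact continuous_const.add
      (intervalIntegral.continuous_primitive (locInt_intervalIntegrable hf) 0)
  have hph : ∀ (y : ℝ → EuclideanSpace ℂ (Fin n)) (t : ℝ),
      phasorV T y k t = (1/(T:ℂ)) • ∫ τ in (t-T)..t, expc c τ • y τ := by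
    intro y t; rfl
  have hgc : Continuous (fun τ => expc c τ • x τ) := (expc_continuous c).smul hxc
  have hgint : ∀ a b : ℝ, IntervalIntegrable (fun τ => expc c τ • x τ) volume a b :=
    fun a b => hgc.intervalIntegrable a b
  have hcgint : ∀ a b : ℝ,
      IntervalIntegrable (fun τ => c • (expc c τ • x τ)) volume a b :=
    fun a b => (hgc.const_smul c).intervalIntegrable a b
  have hφ : ∀ τ : ℝ, phasorV T F k τ - c • phasorV T x k τ
      = (1/(T:ℂ)) • (expc c τ • x τ - expc c (τ - T) • x (τ - T)) := by
    intro τ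
    rw [hph F τ, hph x τ, smul_comm c, ← smul_sub]
    congr 1
    rw [← intervalIntegral.integral_smul c,
      ← intervalIntegral.integral_sub (eF_intervalIntegrable c hf _ _) (hcgint _ _)]
    exact (key_identity c F x hf hxc hsol (τ - T) τ (by linarith)).symm
  have hφc : Continuous (fun τ => phasorV T F k τ - c • phasorV T x k τ) := by
    have heq : (fun τ => phasorV T F k τ - c • phasorV T x k τ)
        = fun τ => (1/(T:ℂ)) • (expc c τ • x τ - expc c (τ - T) • x (τ - T)) :=
      funext hφ
    rw [heq]
    exact ((hgc.sub (hgc.comp (continuous_id.sub continuous_const))).const_smul (1/(T:ℂ)))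
  have goal1 : ∀ t₀ t₁ : ℝ,
      phasorV T x k t₁ - phasorV T x k t₀
        = ∫ τ in t₀..t₁, (phasorV T F k τ - c • phasorV T x k τ) := by
    intro t₀ t₁
    have h1 : ∫ τ in t₀..t₁, (phasorV T F k τ - c • phasorV T x k τ)
        = (1/(T:ℂ)) • ((∫ τ in t₀..t₁, expc c τ • x τ)
            - ∫ τ in (t₀-T)..(t₁-T), expc c τ • x τ) := by
      rw [intervalIntegral.integral_congr (fun τ _ => hφ τ),
        intervalIntegral.integral_smul]
      congr 1
      have hg2 : IntervalIntegrable (fun τ => expc c (τ - T) • x (τ - T)) volume t₀ t₁ :=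
        (hgc.comp (continuous_id.sub continuous_const)).intervalIntegrable _ _
      rw [intervalIntegral.integral_sub (hgint _ _) hg2]
      congr 1
      exact intervalIntegral.integral_comp_sub_right (fun σ => expc c σ • x σ) T
    rw [h1, hph x t₁, hph x t₀, ← smul_sub]
    congr 1
    rw [sub_eq_sub_iff_add_eq_add]
    have A := intervalIntegral.integral_add_adjacent_intervals
      (hgint (t₀-T) t₀) (hgint t₀ t₁)
    have B := intervalIntegral.integral_add_adjacent_intervals
      (hgint (t₀-T) (t₁-T)) (hgint (t₁-T) t₁)
    rw [add_comm] at A B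
    exact B.trans A.symm
  refine ⟨goal1, Filter.Eventually.of_forall (fun t => ?_)⟩
  have hXeq : phasorV T x k = fun u => phasorV T x k 0
      + ∫ τ in (0:ℝ)..u, (phasorV T F k τ - c • phasorV T x k τ) := by
    funext u; rw [← goal1 0 u]; abel
  have hd : HasDerivAt
      (fun u => ∫ τ in (0:ℝ)..u, (phasorV T F k τ - c • phasorV T x k τ))
      (phasorV T F k t - c • phasorV T x k t) t :=
    intervalIntegral.integral_hasDerivAt_right (hφc.intervalIntegrable 0 t)
      (hφc.stronglyMeasurable.stronglyMeasurableAtFilter) hφc.continuousAt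
  have hd' := hd.const_add (phasorV T x k 0)
  rw [← hXeq] at hd'
  exact hd'
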